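/- The numbers W_n^{(-k)}(λ) of negative order -k satisfy W_n^{(-k)}(λ) = (2k)! y_2(n,k;λ), i.e., the EGF coefficients of (λe^t + λ^{-1}e^{-t} + 2)^k equal (2k)! y_2(n,k;λ). -/

import Mathlib

noncomputable def y2 (n k : ℕ) (lam : ℂ) : ℂ :=
  ((2 * k).factorial : ℂ)⁻¹ * ∑ j ∈ Finset.range (k + 1),
    (k.choose j : ℂ) * 2 ^ (k - j) *
      ∑ l ∈ Finset.range (j + 1),
        (j.choose l : ℂ) * ((2 * (l : ℤ) - j : ℤ) : ℂ) ^ n * lam ^ (2 * (l : ℤ) - j)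

open FormalMultilinearSeries in
lemma stmt18_coeff_unique (a b : ℕ → ℂ) (f : ℂ → ℂ)
    (ha : ∀ t : ℂ, HasSum (fun n => a n * t ^ n / n.factorial) (f t))
    (hb : ∀ t : ℂ, HasSum (fun n => b n * t ^ n / n.factorial) (f t)) : a = b := by
  have key : ∀ c : ℕ → ℂ, (∀ t : ℂ, HasSum (fun n => c n * t ^ n / n.factorial) (f t)) →
      HasFPowerSeriesOnBall f (ofScalars ℂ (fun n => c n / n.factorial)) 0 ⊤ := by
    intro c hc
    have hrad : (ofScalars ℂ (fun n => c n / n.factorial)).radius = ⊤ := by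
      apply FormalMultilinearSeries.radius_eq_top_of_summable_norm
      intro r
      have hs : Summable fun n => ‖c n * (r : ℂ) ^ n / n.factorial‖ :=
        (summable_norm_iff).mpr (hc (r : ℂ)).summable
      refine hs.congr fun n => ?_
      rw [ofScalars_norm]
      simp [norm_div, norm_mul, norm_pow, abs_of_nonneg r.coe_nonneg, div_mul_eq_mul_div]
    refine ⟨le_of_eq hrad.symm, ENNReal.zero_lt_top, ?_⟩
    intro y _
    simp only [ofScalars_apply_eq, smul_eq_mul, zero_add]
    exact (hc y).congr_fun fun n => by ring
  have heq : ofScalars ℂ (fun n => a n / n.factorial) = ofScalars ℂ (fun n => b n / n.factorial) :=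
    ((key a ha).hasFPowerSeriesAt).eq_formalMultilinearSeries ((key b hb).hasFPowerSeriesAt)
  have h1 := (ofScalars_series_eq_iff ℂ _ _).mp heq
  funext n
  have h2 := congrFun h1 n
  rw [div_eq_div_iff (by exact_mod_cast n.factorial_ne_zero) (by exact_mod_cast n.factorial_ne_zero),
    mul_left_inj' (by exact_mod_cast n.factorial_ne_zero)] at h2
  exact h2

lemma stmt18_hasSum_exp_term (m t : ℂ) :
    HasSum (fun n => m ^ n * t ^ n / n.factorial) (Complex.exp (m * t)) := by
  have h0 := NormedSpace.expSeries_div_hasSum_exp (m * t)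
  rw [← Complex.exp_eq_exp_ℂ] at h0
  exact h0.congr_fun fun n => by rw [mul_pow]

lemma stmt18_pow_eq (lam : ℂ) (hlam : lam ≠ 0) (t : ℂ) (j l : ℕ) (hl : l ≤ j) :
    (lam * Complex.exp t) ^ l * (lam⁻¹ * Complex.exp (-t)) ^ (j - l) =
      lam ^ (2 * (l : ℤ) - (j : ℤ)) * Complex.exp (((2 * (l : ℤ) - (j : ℤ) : ℤ) : ℂ) * t) := by
  have hz : (2 * (l : ℤ) - (j : ℤ)) = (l : ℤ) - ((j - l : ℕ) : ℤ) := by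
    push_cast [Nat.cast_sub hl]; ring
  rw [hz, zpow_sub₀ hlam, zpow_natCast, zpow_natCast, mul_pow, mul_pow,
    ← Complex.exp_nat_mul, ← Complex.exp_nat_mul, inv_pow]
  have : ((((l:ℤ) - ((j-l:ℕ):ℤ)) : ℤ) : ℂ) * t = (l : ℂ) * t + (j - l : ℕ) * (-t) := by
    push_cast; ring
  rw [this, Complex.exp_add, div_eq_mul_inv]
  ring

lemma stmt18_hasSum (lam : ℂ) (hlam : lam ≠ 0) (k : ℕ) (t : ℂ) :
    HasSum (fun n => (∑ j ∈ Finset.range (k + 1),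
        (k.choose j : ℂ) * 2 ^ (k - j) *
          ∑ l ∈ Finset.range (j + 1),
            (j.choose l : ℂ) * ((2 * (l : ℤ) - j : ℤ) : ℂ) ^ n * lam ^ (2 * (l : ℤ) - j))
        * t ^ n / n.factorial)
      ((lam * Complex.exp t + lam⁻¹ * Complex.exp (-t) + 2) ^ k) := by
  -- termwise series
  have hterm : ∀ j l : ℕ, HasSum
      (fun n => (k.choose j : ℂ) * 2 ^ (k - j) *
        ((j.choose l : ℂ) * ((2 * (l : ℤ) - j : ℤ) : ℂ) ^ n * lam ^ (2 * (l : ℤ) - (j:ℤ)))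
        * t ^ n / n.factorial)
      ((k.choose j : ℂ) * 2 ^ (k - j) *
        ((j.choose l : ℂ) * lam ^ (2 * (l : ℤ) - (j:ℤ))) *
          Complex.exp (((2 * (l : ℤ) - (j:ℤ) : ℤ) : ℂ) * t)) := by
    intro j l
    have h0 := (stmt18_hasSum_exp_term (((2 * (l : ℤ) - (j:ℤ) : ℤ) : ℂ)) t).mul_left
      ((k.choose j : ℂ) * 2 ^ (k - j) * ((j.choose l : ℂ) * lam ^ (2 * (l : ℤ) - (j:ℤ))))
    refine h0.congr_fun fun n => ?_
    ring
  have hinner : ∀ j : ℕ, HasSum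
      (fun n => ∑ l ∈ Finset.range (j + 1), (k.choose j : ℂ) * 2 ^ (k - j) *
        ((j.choose l : ℂ) * ((2 * (l : ℤ) - j : ℤ) : ℂ) ^ n * lam ^ (2 * (l : ℤ) - (j:ℤ)))
        * t ^ n / n.factorial)
      (∑ l ∈ Finset.range (j + 1), (k.choose j : ℂ) * 2 ^ (k - j) *
        ((j.choose l : ℂ) * lam ^ (2 * (l : ℤ) - (j:ℤ))) *
          Complex.exp (((2 * (l : ℤ) - (j:ℤ) : ℤ) : ℂ) * t)) :=
    fun j => hasSum_sum fun l _ => hterm j l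
  have houter : HasSum
      (fun n => ∑ j ∈ Finset.range (k + 1), ∑ l ∈ Finset.range (j + 1),
        (k.choose j : ℂ) * 2 ^ (k - j) *
        ((j.choose l : ℂ) * ((2 * (l : ℤ) - j : ℤ) : ℂ) ^ n * lam ^ (2 * (l : ℤ) - (j:ℤ)))
        * t ^ n / n.factorial)
      (∑ j ∈ Finset.range (k + 1), ∑ l ∈ Finset.range (j + 1),
        (k.choose j : ℂ) * 2 ^ (k - j) *
        ((j.choose l : ℂ) * lam ^ (2 * (l : ℤ) - (j:ℤ))) *
          Complex.exp (((2 * (l : ℤ) - (j:ℤ) : ℤ) : ℂ) * t)) :=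
    hasSum_sum fun j _ => hinner j
  have hval : (∑ j ∈ Finset.range (k + 1), ∑ l ∈ Finset.range (j + 1),
        (k.choose j : ℂ) * 2 ^ (k - j) *
        ((j.choose l : ℂ) * lam ^ (2 * (l : ℤ) - (j:ℤ))) *
          Complex.exp (((2 * (l : ℤ) - (j:ℤ) : ℤ) : ℂ) * t))
      = (lam * Complex.exp t + lam⁻¹ * Complex.exp (-t) + 2) ^ k := by
    rw [add_pow]
    refine Finset.sum_congr rfl fun j hj => ?_
    rw [add_pow, Finset.sum_mul, Finset.sum_mul]
    refine Finset.sum_congr rfl fun l hl => ?_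
    rw [stmt18_pow_eq lam hlam t j l (Nat.lt_succ_iff.mp (Finset.mem_range.mp hl))]
    ring
  rw [← hval]
  refine houter.congr_fun fun n => ?_
  rw [Finset.sum_mul, Finset.sum_div]
  refine Finset.sum_congr rfl fun j _ => ?_
  rw [Finset.mul_sum, Finset.sum_mul, Finset.sum_div]

theorem stmt18 (lam : ℂ) (hlam : lam ≠ 0) (W : ℕ → ℕ → ℂ)
    (hW : ∀ k : ℕ, ∀ t : ℂ, HasSum (fun n => W n k * t ^ n / n.factorial)
      ((lam * Complex.exp t + lam⁻¹ * Complex.exp (-t) + 2) ^ k)) :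
    ∀ n k : ℕ, W n k = ((2 * k).factorial : ℂ) * y2 n k lam := by
  intro n k
  have hWS := stmt18_coeff_unique (fun n => W n k)
    (fun n => ∑ j ∈ Finset.range (k + 1),
        (k.choose j : ℂ) * 2 ^ (k - j) *
          ∑ l ∈ Finset.range (j + 1),
            (j.choose l : ℂ) * ((2 * (l : ℤ) - j : ℤ) : ℂ) ^ n * lam ^ (2 * (l : ℤ) - j))
    (fun t => (lam * Complex.exp t + lam⁻¹ * Complex.exp (-t) + 2) ^ k)
    (hW k) (stmt18_hasSum lam hlam k)
  rw [y2, ← mul_assoc, mul_inv_cancel₀ (by exact_mod_cast (2 * k).factorial_ne_zero), one_mul]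
  exact congrFun hWS n
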